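/- arXiv:2202.02214 — 6 statements merged into one kernel-verified Lean document; each statement's English description precedes it below -/
import Mathlib

section
/- Let r, ε, ρ, e₁, ..., e_k ∈ Z^2 with ⟨ρ, e_i⟩ = −1 for all i, and define homogeneous derivations ∂_{v,w}(χ^m) = ⟨v,m⟩·χ^{m+w} on the Laurent polynomial ring K[x₁^{±1}, x₂^{±1}]. Then the iterated commutator [ ... [[∂_{r,ε}, ∂_{ρ,e₁}], ∂_{ρ,e₂}], ..., ∂_{ρ,e_k}] equals ∂_{f,s} where s = ε + e₁ + ... + e_k and f = (−1)^{k+1}( ⟨ρ,ε⟩^{\underline{k−1}} · ⟨r, e₁+...+e_k⟩ · ρ − ⟨ρ,ε⟩^{\underline{k}} · r ), with x^{\underline{j}} = x(x−1)···(x−j+1) the falling factorial. -/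
/-- Standard pairing on the lattice `ℤ × ℤ`. -/
def pairZ (v m : ℤ × ℤ) : ℤ := v.1 * m.1 + v.2 * m.2

lemma pairZ_add_right (v a b : ℤ × ℤ) : pairZ v (a + b) = pairZ v a + pairZ v b := by
  simp [pairZ]; ring

lemma pairZ_smul_left (a : ℤ) (v m : ℤ × ℤ) : pairZ (a • v) m = a * pairZ v m := by
  simp [pairZ, Prod.smul_fst, Prod.smul_snd]; ring

lemma pairZ_sub_left (v w m : ℤ × ℤ) : pairZ (v - w) m = pairZ v m - pairZ w m := by
  simp [pairZ]; ring

lemma comm_apply {K : Type*} [Field K]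
    (A B : Module.End K (AddMonoidAlgebra K (ℤ × ℤ))) (f s ρ e : ℤ × ℤ)
    (hA : ∀ m : ℤ × ℤ, A (AddMonoidAlgebra.single m 1) = pairZ f m • AddMonoidAlgebra.single (m + s) (1 : K))
    (hB : ∀ m : ℤ × ℤ, B (AddMonoidAlgebra.single m 1) = pairZ ρ m • AddMonoidAlgebra.single (m + e) (1 : K)) :
    ∀ m : ℤ × ℤ, (A * B - B * A) (AddMonoidAlgebra.single m 1)
      = pairZ (pairZ f e • ρ - pairZ ρ s • f) m • AddMonoidAlgebra.single (m + (s + e)) (1 : K) := by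
  intro m
  have : (A * B - B * A) (AddMonoidAlgebra.single m 1)
      = A (B (AddMonoidAlgebra.single m 1)) - B (A (AddMonoidAlgebra.single m 1)) := rfl
  rw [this, hA, hB, map_zsmul, map_zsmul, hA, hB, smul_smul, smul_smul]
  have h1 : m + e + s = m + (s + e) := by ring
  have h2 : m + s + e = m + (s + e) := by ring
  rw [h1, h2, ← sub_smul]
  congr 1
  simp only [pairZ, Prod.fst_add, Prod.snd_add, Prod.smul_fst, Prod.smul_snd, smul_eq_mul,
    Prod.fst_sub, Prod.snd_sub]
  ring

lemma key {K : Type*} [Field K] (n : ℕ)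
    (r ε ρ : ℤ × ℤ)
    (D0 : Module.End K (AddMonoidAlgebra K (ℤ × ℤ)))
    (h0 : ∀ m : ℤ × ℤ, D0 (AddMonoidAlgebra.single m 1) = pairZ r m • AddMonoidAlgebra.single (m + ε) (1 : K))
    (e : Fin (n + 1) → ℤ × ℤ) (he : ∀ i, pairZ ρ (e i) = -1)
    (D : Fin (n + 1) → Module.End K (AddMonoidAlgebra K (ℤ × ℤ)))
    (h : ∀ i, ∀ m : ℤ × ℤ,
      D i (AddMonoidAlgebra.single m 1) = pairZ ρ m • AddMonoidAlgebra.single (m + e i) (1 : K)) :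
    ∀ m : ℤ × ℤ,
      ((List.ofFn D).foldl (fun A B => A * B - B * A) D0) (AddMonoidAlgebra.single m 1)
        = pairZ (((-1 : ℤ) ^ (n + 2)) •
            (((descPochhammer ℤ n).eval (pairZ ρ ε) * pairZ r (∑ i, e i)) • ρ
              - ((descPochhammer ℤ (n + 1)).eval (pairZ ρ ε)) • r)) m •
          AddMonoidAlgebra.single (m + (ε + ∑ i, e i)) (1 : K) := by
  induction n with
  | zero =>
    intro m
    have hfold : (List.ofFn D).foldl (fun A B => A * B - B * A) D0
        = D0 * D 0 - D 0 * D0 := by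
      simp [List.ofFn_succ]
    rw [hfold, comm_apply D0 (D 0) r ε ρ (e 0) h0 (h 0) m]
    have hs : (∑ i, e i) = e 0 := by simp
    rw [hs]
    have hd : (descPochhammer ℤ (0 + 1)).eval (pairZ ρ ε) = pairZ ρ ε := by
      simp [descPochhammer_succ_eval]
    have hd0 : (descPochhammer ℤ 0).eval (pairZ ρ ε) = 1 := by simp
    rw [hd, hd0]
    norm_num
  | succ n ih =>
    intro m
    -- split off the last derivation
    have hofn : List.ofFn D
        = (List.ofFn (fun i : Fin (n + 1) => D i.castSucc)).concat (D (Fin.last (n + 1))) := by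
      rw [List.ofFn_succ']
    have hfold : (List.ofFn D).foldl (fun A B => A * B - B * A) D0
        = (fun A B => A * B - B * A)
            ((List.ofFn (fun i : Fin (n + 1) => D i.castSucc)).foldl
              (fun A B => A * B - B * A) D0) (D (Fin.last (n + 1))) := by
      rw [hofn, List.concat_eq_append, List.foldl_append, List.foldl_cons, List.foldl_nil]
    set L := (List.ofFn (fun i : Fin (n + 1) => D i.castSucc)).foldl
        (fun A B => A * B - B * A) D0 with hL
    have hLapp := ih (fun i => e i.castSucc) (fun i => he i.castSucc)
        (fun i => D i.castSucc) (fun i => h i.castSucc)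
    set p := pairZ ρ ε with hp
    set s1 := ε + ∑ i : Fin (n + 1), e i.castSucc with hs1
    set f1 := ((-1 : ℤ) ^ (n + 2)) •
        (((descPochhammer ℤ n).eval p * pairZ r (∑ i : Fin (n + 1), e i.castSucc)) • ρ
          - ((descPochhammer ℤ (n + 1)).eval p) • r) with hf1
    have hcomm := comm_apply L (D (Fin.last (n + 1))) f1 s1 ρ (e (Fin.last (n + 1)))
        hLapp (h (Fin.last (n + 1)))
    rw [hfold]
    simp only []
    rw [hcomm m]
    have hsum : (∑ i : Fin (n + 2), e i)
        = (∑ i : Fin (n + 1), e i.castSucc) + e (Fin.last (n + 1)) := by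
      rw [Fin.sum_univ_castSucc]
    have hindex : s1 + e (Fin.last (n + 1)) = ε + ∑ i : Fin (n + 2), e i := by
      rw [hsum, hs1]; ring
    rw [hindex]
    congr 2
    -- vector identity
    have hps1 : pairZ ρ s1 = p - (n + 1 : ℤ) := by
      rw [hs1, pairZ_add_right]
      have : pairZ ρ (∑ i : Fin (n + 1), e i.castSucc) = -(n + 1 : ℤ) := by
        rw [show pairZ ρ (∑ i : Fin (n + 1), e i.castSucc)
            = ∑ i : Fin (n + 1), pairZ ρ (e i.castSucc) by
          induction (Finset.univ : Finset (Fin (n+1))) using Finset.induction with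
          | empty => simp [pairZ]
          | insert hx => simp_all [pairZ_add_right]]
        simp [he]
      rw [this]; ring
    have hlast : pairZ ρ (e (Fin.last (n + 1))) = -1 := he _
    have hdesc1 : (descPochhammer ℤ (n + 1)).eval p = (descPochhammer ℤ n).eval p * (p - n) := by
      rw [descPochhammer_succ_eval]
    have hdesc2 : (descPochhammer ℤ (n + 2)).eval p
        = (descPochhammer ℤ (n + 1)).eval p * (p - (n + 1)) := by
      rw [descPochhammer_succ_eval]; push_cast; ring
    have hre : pairZ r (∑ i : Fin (n + 2), e i)
        = pairZ r (∑ i : Fin (n + 1), e i.castSucc) + pairZ r (e (Fin.last (n + 1))) := by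
      rw [hsum, pairZ_add_right]
    -- finish componentwise
    have hf1e : pairZ f1 (e (Fin.last (n + 1)))
        = ((-1 : ℤ) ^ (n + 2)) *
          (((descPochhammer ℤ n).eval p * pairZ r (∑ i : Fin (n + 1), e i.castSucc)) * (-1)
            - ((descPochhammer ℤ (n + 1)).eval p) * pairZ r (e (Fin.last (n + 1)))) := by
      rw [hf1, pairZ_smul_left, pairZ_sub_left, pairZ_smul_left, pairZ_smul_left, hlast]
    have hdesc1' : (descPochhammer ℤ (1 + n)).eval p
        = (descPochhammer ℤ n).eval p * (p - n) := by rw [add_comm 1 n]; exact hdesc1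
    apply Prod.ext <;>
    · simp only [Prod.smul_fst, Prod.smul_snd, Prod.fst_sub, Prod.snd_sub, smul_eq_mul]
      rw [hf1e, hps1, hdesc2, hre, hf1]
      simp only [Prod.smul_fst, Prod.smul_snd, Prod.fst_sub, Prod.snd_sub, smul_eq_mul,
        hdesc1, hdesc1', pow_succ]
      ring

theorem stmt_5 (K : Type*) [Field K] [CharZero K] (k : ℕ) (hk : 0 < k)
    (r ε ρ : ℤ × ℤ) (e : Fin k → ℤ × ℤ) (he : ∀ i, pairZ ρ (e i) = -1)
    (D0 : Module.End K (AddMonoidAlgebra K (ℤ × ℤ)))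
    (D : Fin k → Module.End K (AddMonoidAlgebra K (ℤ × ℤ)))
    (h0 : ∀ m : ℤ × ℤ, D0 (AddMonoidAlgebra.single m 1) = pairZ r m • AddMonoidAlgebra.single (m + ε) (1 : K))
    (h : ∀ i, ∀ m : ℤ × ℤ,
      D i (AddMonoidAlgebra.single m 1) = pairZ ρ m • AddMonoidAlgebra.single (m + e i) (1 : K)) :
    ∀ m : ℤ × ℤ,
      ((List.ofFn D).foldl (fun A B => A * B - B * A) D0) (AddMonoidAlgebra.single m 1)
        = pairZ (((-1 : ℤ) ^ (k + 1)) •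
            (((descPochhammer ℤ (k - 1)).eval (pairZ ρ ε) * pairZ r (∑ i, e i)) • ρ
              - ((descPochhammer ℤ k).eval (pairZ ρ ε)) • r)) m •
          AddMonoidAlgebra.single (m + (ε + ∑ i, e i)) (1 : K) := by
  obtain ⟨n, rfl⟩ : ∃ n, k = n + 1 := ⟨k - 1, (Nat.succ_pred_eq_of_pos hk).symm⟩
  have := key n r ε ρ D0 h0 e he D h
  simpa using this
end

section
/- Let K be a field of characteristic zero containing a primitive m-th root of unity ω for some integer m > 1. Suppose d₁, ..., d_k are positive integers with m dividing d_i − 1 for every i. Then the subset S = {(P, ωP) : P ∈ K²} of K² × K² (where ω acts diagonally on coordinates) is invariant under the diagonal action of every automorphism of the form (x,y) ↦ (x + α y, y) with α ∈ K and every automorphism of the form (x,y) ↦ (x, y + β x^{d_i}) with β ∈ K. Consequently the group generated by these automorphisms does not act 2-transitively on K² \ {0}. -/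
theorem stmt_7 (K : Type*) [Field K] [CharZero K] (m : ℕ) (hm : 1 < m)
    (ω : K) (hω : IsPrimitiveRoot ω m) (k : ℕ) (d : Fin k → ℕ)
    (hd : ∀ i, 0 < d i) (hdiv : ∀ i, (m : ℤ) ∣ (d i : ℤ) - 1) :
    (∀ σ ∈ ({σ : Equiv.Perm (K × K) |
        (∃ α : K, ∀ p : K × K, σ p = (p.1 + α * p.2, p.2)) ∨
        (∃ (β : K) (i : Fin k), ∀ p : K × K, σ p = (p.1, p.2 + β * p.1 ^ (d i)))} :
          Set (Equiv.Perm (K × K))),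
      ∀ q ∈ {q : (K × K) × (K × K) | ∃ P : K × K, q = (P, (ω * P.1, ω * P.2))},
        ((σ q.1, σ q.2) : (K × K) × (K × K)) ∈
          {q : (K × K) × (K × K) | ∃ P : K × K, q = (P, (ω * P.1, ω * P.2))}) ∧
    ¬ (∀ P₁ P₂ Q₁ Q₂ : K × K, P₁ ≠ 0 → P₂ ≠ 0 → Q₁ ≠ 0 → Q₂ ≠ 0 → P₁ ≠ P₂ → Q₁ ≠ Q₂ →
        ∃ σ ∈ Subgroup.closure ({σ : Equiv.Perm (K × K) |
            (∃ α : K, ∀ p : K × K, σ p = (p.1 + α * p.2, p.2)) ∨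
            (∃ (β : K) (i : Fin k), ∀ p : K × K, σ p = (p.1, p.2 + β * p.1 ^ (d i)))}),
          σ P₁ = Q₁ ∧ σ P₂ = Q₂) := by
  have hωm : ω ^ m = 1 := hω.pow_eq_one
  -- ω ^ (d i) = ω
  have hpow : ∀ i, ω ^ (d i) = ω := by
    intro i
    obtain ⟨t, ht⟩ := hdiv i
    have hdi : 1 ≤ d i := hd i
    have ht' : (d i : ℤ) = 1 + m * t := by linarith
    have htnn : 0 ≤ t := by
      by_contra h
      push_neg at h
      have : (m : ℤ) * t ≤ -m := by
        have : t ≤ -1 := by omega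
        nlinarith [Int.natCast_pos.mpr (Nat.lt_of_lt_of_le Nat.zero_lt_one hm.le)]
      have : (d i : ℤ) ≤ 1 - m := by omega
      omega
    obtain ⟨s, rfl⟩ := Int.eq_ofNat_of_zero_le htnn
    have hds : d i = 1 + m * s := by exact_mod_cast ht'
    rw [hds, pow_add, pow_mul, hωm, one_pow, pow_one, mul_one]
  set f : K × K → K × K := fun P => (ω * P.1, ω * P.2) with hf
  set gens : Set (Equiv.Perm (K × K)) := {σ : Equiv.Perm (K × K) |
      (∃ α : K, ∀ p : K × K, σ p = (p.1 + α * p.2, p.2)) ∨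
      (∃ (β : K) (i : Fin k), ∀ p : K × K, σ p = (p.1, p.2 + β * p.1 ^ (d i)))} with hgens
  have key : ∀ σ ∈ gens, ∀ P : K × K, σ (f P) = f (σ P) := by
    rintro σ (⟨α, hσ⟩ | ⟨β, i, hσ⟩) P
    · simp only [hσ, hf]
      ext <;> simp <;> ring
    · simp only [hσ, hf]
      ext
      · simp
      · simp only
        rw [mul_pow, hpow i]
        ring
  have keyc : ∀ σ ∈ Subgroup.closure gens, ∀ P : K × K, σ (f P) = f (σ P) := by
    intro σ hσ
    induction hσ using Subgroup.closure_induction with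
    | mem τ hτ => exact key τ hτ
    | one => intro P; simp
    | mul τ ρ _ _ hτ hρ =>
        intro P
        simp only [Equiv.Perm.mul_apply]
        rw [hρ, hτ]
    | inv τ _ hτ =>
        intro P
        have h := hτ (τ⁻¹ P)
        simp only [Equiv.Perm.coe_inv, Equiv.apply_symm_apply] at h
        apply τ.injective
        simp only [Equiv.Perm.coe_inv, Equiv.apply_symm_apply]
        exact h.symm
  constructor
  · rintro σ hσ q ⟨P, rfl⟩
    exact ⟨σ P, by have hk := key σ hσ P; simp only [hf] at hk; simp [hk]⟩
  · intro h2
    have hω1 : ω ≠ 1 := hω.ne_one hm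
    have hP12 : ((1 : K), (0 : K)) ≠ ((ω : K), (0 : K)) := by
      simp [Ne, Prod.ext_iff]; exact fun h => hω1 h.symm
    obtain ⟨σ, hσmem, hσ1, hσ2⟩ := h2 (1, 0) (ω, 0) (1, 0) (2, 0)
      (by simp [Prod.ext_iff]) (by simp [Prod.ext_iff, hω.ne_zero (by omega)])
      (by simp [Prod.ext_iff]) (by simp [Prod.ext_iff]) hP12
      (by norm_num [Prod.ext_iff])
    have := keyc σ hσmem (1, 0)
    simp only [hf] at this
    rw [show ((ω * 1, ω * 0) : K × K) = (ω, 0) by simp] at this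
    rw [hσ1, hσ2] at this
    have h2ω : (2 : K) = ω := by
      have := congrArg Prod.fst this
      simpa using this
    have : (2 : K) ^ m = 1 := by rw [h2ω]; exact hωm
    have : ((2 ^ m : ℕ) : K) = ((1 : ℕ) : K) := by push_cast; simpa using this
    have := Nat.cast_injective this
    have hm2 : 2 ^ m ≥ 2 ^ 1 := Nat.pow_le_pow_right (by norm_num) hm.le
    omega
end

section
/- Let m > 1 be an integer and ω a primitive m-th root of unity in a field K of characteristic zero. Let e₁, ..., e_k be vectors (a_i, −1) and ε₁, ..., ε_l be vectors (−1, b_j) in Z² (with a_i, b_j ≥ 0), and suppose m equals the index of Z⟨e₁,...,e_k, ε₁,...,ε_l⟩ in Z². Then the set S = {((z,w), (ωz, ω^{a₁}w)) : (z,w) ∈ K²} ⊆ K² × K² is invariant under the diagonal action of every automorphism H_{b_j}(α): (x,y) ↦ (x + α y^{b_j}, y) and every automorphism K_{a_i}(β): (x,y) ↦ (x, y + β x^{a_i}), for all α, β ∈ K. -/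
theorem stmt_9 (K : Type*) [Field K] [CharZero K] (m : ℕ) (hm : 1 < m)
    (ω : K) (hω : IsPrimitiveRoot ω m)
    (k l : ℕ) (a : Fin (k + 1) → ℕ) (b : Fin l → ℕ)
    (hidx : (AddSubgroup.closure
      ((Set.range fun i : Fin (k + 1) => (((a i : ℤ), -1) : ℤ × ℤ)) ∪
       (Set.range fun j : Fin l => (((-1 : ℤ), (b j : ℤ)) : ℤ × ℤ)))).index = m) :
    (∀ (α : K) (j : Fin l),
      ∀ q ∈ {q : (K × K) × (K × K) | ∃ z w : K, q = ((z, w), (ω * z, ω ^ (a 0) * w))},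
        ((((q.1.1 + α * q.1.2 ^ (b j), q.1.2) : K × K),
          ((q.2.1 + α * q.2.2 ^ (b j), q.2.2) : K × K)) : (K × K) × (K × K)) ∈
          {q : (K × K) × (K × K) | ∃ z w : K, q = ((z, w), (ω * z, ω ^ (a 0) * w))}) ∧
    (∀ (β : K) (i : Fin (k + 1)),
      ∀ q ∈ {q : (K × K) × (K × K) | ∃ z w : K, q = ((z, w), (ω * z, ω ^ (a 0) * w))},
        ((((q.1.1, q.1.2 + β * q.1.1 ^ (a i)) : K × K),
          ((q.2.1, q.2.2 + β * q.2.1 ^ (a i)) : K × K)) : (K × K) × (K × K)) ∈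
          {q : (K × K) × (K × K) | ∃ z w : K, q = ((z, w), (ω * z, ω ^ (a 0) * w))}) := by
  classical
  set H := AddSubgroup.closure
      ((Set.range fun i : Fin (k + 1) => (((a i : ℤ), -1) : ℤ × ℤ)) ∪
       (Set.range fun j : Fin l => (((-1 : ℤ), (b j : ℤ)) : ℤ × ℤ))) with hH
  -- quotient group
  let Q := (ℤ × ℤ) ⧸ H
  have hcard : Nat.card Q = m := hidx
  have hfin : Finite Q := Nat.finite_of_card_ne_zero (by omega)
  let e : Q := QuotientAddGroup.mk ((1, 0) : ℤ × ℤ)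
  let f : Q := QuotientAddGroup.mk ((0, 1) : ℤ × ℤ)
  have hmemA : ∀ i, (((a i : ℤ), -1) : ℤ × ℤ) ∈ H := fun i =>
    AddSubgroup.subset_closure (Or.inl ⟨i, rfl⟩)
  have hmemB : ∀ j, (((-1 : ℤ), (b j : ℤ)) : ℤ × ℤ) ∈ H := fun j =>
    AddSubgroup.subset_closure (Or.inr ⟨j, rfl⟩)
  have hf : ∀ i, f = (a i : ℤ) • e := by
    intro i
    have h1 : (((0, 1) : ℤ × ℤ) - (a i : ℤ) • ((1, 0) : ℤ × ℤ)) ∈ H := by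
      have : (((0, 1) : ℤ × ℤ) - (a i : ℤ) • ((1, 0) : ℤ × ℤ)) = -(((a i : ℤ), -1)) := by
        simp [Prod.ext_iff]
      rw [this]
      exact neg_mem (hmemA i)
    have h2 : QuotientAddGroup.mk' H (((0, 1) : ℤ × ℤ) - (a i : ℤ) • ((1, 0) : ℤ × ℤ)) = 0 :=
      (QuotientAddGroup.eq_zero_iff _).mpr h1
    rw [map_sub, map_zsmul] at h2
    exact sub_eq_zero.mp h2
  have he : ∀ j, e = (b j : ℤ) • f := by
    intro j
    have h1 : (((1, 0) : ℤ × ℤ) - (b j : ℤ) • ((0, 1) : ℤ × ℤ)) ∈ H := by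
      have : (((1, 0) : ℤ × ℤ) - (b j : ℤ) • ((0, 1) : ℤ × ℤ)) = -(((-1 : ℤ), (b j : ℤ))) := by
        simp [Prod.ext_iff]
      rw [this]
      exact neg_mem (hmemB j)
    have h2 : QuotientAddGroup.mk' H (((1, 0) : ℤ × ℤ) - (b j : ℤ) • ((0, 1) : ℤ × ℤ)) = 0 :=
      (QuotientAddGroup.eq_zero_iff _).mpr h1
    rw [map_sub, map_zsmul] at h2
    exact sub_eq_zero.mp h2
  -- Q is generated by e
  have hgen : ∀ x : Q, x ∈ AddSubgroup.zmultiples e := by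
    intro x
    obtain ⟨⟨p, q⟩, rfl⟩ := QuotientAddGroup.mk_surjective x
    have hx : ((p, q) : ℤ × ℤ) = p • ((1, 0) : ℤ × ℤ) + q • ((0, 1) : ℤ × ℤ) := by
      simp [Prod.ext_iff]
    have h3 : QuotientAddGroup.mk' H ((p, q) : ℤ × ℤ) = p • e + q • f := by
      rw [hx, map_add, map_zsmul, map_zsmul]; rfl
    show QuotientAddGroup.mk' H ((p, q) : ℤ × ℤ) ∈ AddSubgroup.zmultiples e
    rw [h3, hf 0, smul_smul]
    exact ⟨p + q * (a 0), by simp [add_zsmul]⟩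
  have horder : addOrderOf e = m := by
    rw [addOrderOf_eq_card_of_forall_mem_zmultiples hgen, hcard]
  have hdvd1 : ∀ i j, (m : ℤ) ∣ ((a i : ℤ) * (b j : ℤ) - 1) := by
    intro i j
    rw [← horder]
    rw [addOrderOf_dvd_iff_zsmul_eq_zero]
    have : e = ((a i : ℤ) * (b j : ℤ)) • e := by
      conv_lhs => rw [he j, hf i, smul_smul, mul_comm]
    rw [sub_zsmul, ← this]
    simp
  have hdvd2 : ∀ i, (m : ℤ) ∣ ((a 0 : ℤ) - (a i : ℤ)) := by
    intro i
    rw [← horder, addOrderOf_dvd_iff_zsmul_eq_zero, sub_zsmul, ← hf 0, ← hf i]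
    simp
  have hω0 : ω ≠ 0 := by
    intro h
    have := hω.pow_eq_one
    rw [h] at this
    simp [zero_pow (by omega : m ≠ 0)] at this
  -- ω ^ (a i * b j) = ω
  have hpow1 : ∀ i j, ω ^ (a i * b j) = ω := by
    intro i j
    have h1 : ω ^ ((a i : ℤ) * (b j : ℤ) - 1) = 1 :=
      (hω.zpow_eq_one_iff_dvd _).mpr (hdvd1 i j)
    rw [zpow_sub₀ hω0] at h1
    have h2 : ω ^ ((a i : ℤ) * (b j : ℤ)) = ω := by
      field_simp at h1
      simpa using h1
    calc ω ^ (a i * b j) = ω ^ ((a i * b j : ℕ) : ℤ) := by rw [zpow_natCast]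
      _ = ω := by push_cast; exact h2
  -- ω ^ (a i) = ω ^ (a 0)
  have hpow2 : ∀ i, ω ^ (a i) = ω ^ (a 0) := by
    intro i
    have h1 : ω ^ ((a 0 : ℤ) - (a i : ℤ)) = 1 :=
      (hω.zpow_eq_one_iff_dvd _).mpr (hdvd2 i)
    rw [zpow_sub₀ hω0, div_eq_one_iff_eq (zpow_ne_zero _ hω0)] at h1
    have := h1.symm
    calc ω ^ (a i) = ω ^ ((a i : ℕ) : ℤ) := by rw [zpow_natCast]
      _ = ω ^ ((a 0 : ℕ) : ℤ) := this
      _ = ω ^ (a 0) := by rw [zpow_natCast]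
  constructor
  · intro α j q hq
    obtain ⟨z, w, rfl⟩ := hq
    have key : ω * (z + α * w ^ (b j)) = ω * z + α * (ω ^ (a 0) * w) ^ (b j) := by
      rw [mul_pow, ← pow_mul, hpow1 0 j]; ring
    exact ⟨z + α * w ^ (b j), w, by rw [key]⟩
  · intro β i q hq
    obtain ⟨z, w, rfl⟩ := hq
    have key : ω ^ (a 0) * w + β * (ω * z) ^ (a i) = ω ^ (a 0) * (w + β * z ^ (a i)) := by
      rw [mul_pow, hpow2 i]; ring
    exact ⟨z, w + β * z ^ (a i), by rw [key]⟩
end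

section
/- Let K be an algebraically closed field of characteristic zero and let s, t be positive integers. Let G be the group of automorphisms of the affine plane A² over K generated by all maps (x,y) ↦ (x + α y^t, y) for α ∈ K together with all maps (x,y) ↦ (x, y + S(x)) where S ∈ K[x] is divisible by x^s. Then G acts infinitely transitively on A² \ {0}: for every m ≥ 1 and any two m-tuples of pairwise distinct points of A² \ {0}, some element of G maps the first tuple to the second. -/
open Polynomial

namespace Stmt13Aux

variable {K : Type*} [Field K]

/-- Horizontal shear `(x,y) ↦ (x + α y^t, y)`. -/
def Hmap (t : ℕ) (α : K) : Equiv.Perm (K × K) where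
  toFun p := (p.1 + α * p.2 ^ t, p.2)
  invFun p := (p.1 - α * p.2 ^ t, p.2)
  left_inv p := by simp
  right_inv p := by simp

/-- Vertical shear `(x,y) ↦ (x, y + S(x))`. -/
def Vmap (S : K[X]) : Equiv.Perm (K × K) where
  toFun p := (p.1, p.2 + S.eval p.1)
  invFun p := (p.1, p.2 - S.eval p.1)
  left_inv p := by simp
  right_inv p := by simp

/-- The generating set from the statement. -/
def Gset (K : Type*) [Field K] (s t : ℕ) : Set (Equiv.Perm (K × K)) :=
  {σ : Equiv.Perm (K × K) |
      (∃ α : K, ∀ p : K × K, σ p = (p.1 + α * p.2 ^ t, p.2)) ∨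
      (∃ S : Polynomial K, (Polynomial.X ^ s ∣ S) ∧
        ∀ p : K × K, σ p = (p.1, p.2 + S.eval p.1))}

lemma Hmem (s t : ℕ) (α : K) : Hmap t α ∈ Subgroup.closure (Gset K s t) :=
  Subgroup.subset_closure (Or.inl ⟨α, fun _ => rfl⟩)

lemma Vmem (s t : ℕ) (S : K[X]) (hS : X ^ s ∣ S) :
    Vmap S ∈ Subgroup.closure (Gset K s t) :=
  Subgroup.subset_closure (Or.inr ⟨S, hS, fun _ => rfl⟩)

lemma finite_linear (a b : K) (h : a ≠ 0 ∨ b ≠ 0) : {c : K | a + c * b = 0}.Finite := by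
  rcases eq_or_ne b 0 with hb | hb
  · have ha : a ≠ 0 := h.resolve_right (by simp [hb])
    have : {c : K | a + c * b = 0} = ∅ := by
      ext c; simp [hb, ha]
    simp [this]
  · refine (Set.finite_singleton (-a / b)).subset ?_
    intro c hc
    simp only [Set.mem_setOf_eq] at hc
    have : c = -a / b := by field_simp; linear_combination hc
    simp [this]

lemma finite_pow_eq (t : ℕ) (ht : 0 < t) (x u v : K) (hx : x ≠ 0) (huv : u ≠ v) :
    {c : K | (u + c * x) ^ t = (v + c * x) ^ t}.Finite := by
  have hZ : ({ζ : K | ζ ^ t = 1}).Finite := by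
    have hne : (X ^ t - 1 : K[X]) ≠ 0 := by
      simpa using X_pow_sub_C_ne_zero ht (1 : K)
    have : {ζ : K | ζ ^ t = 1} = {ζ : K | (X ^ t - 1 : K[X]).IsRoot ζ} := by
      ext ζ; simp [IsRoot, sub_eq_zero]
    rw [this]; exact finite_setOf_isRoot hne
  have hfin : ∀ ζ ∈ {ζ : K | ζ ^ t = 1},
      ({c : K | (u - ζ * v) + c * (x * (1 - ζ)) = 0}).Finite := by
    intro ζ _
    apply finite_linear
    rcases eq_or_ne (x * (1 - ζ)) 0 with h0 | h0
    · left
      have : ζ = 1 := by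
        rcases mul_eq_zero.1 h0 with h | h
        · exact absurd h hx
        · linear_combination -h
      rw [this, one_mul]
      exact sub_ne_zero.2 huv
    · right; exact h0
  refine (Set.Finite.biUnion hZ hfin).subset ?_
  intro c hc
  simp only [Set.mem_setOf_eq] at hc
  have hB : v + c * x ≠ 0 := by
    intro hB0
    have hA0 : (u + c * x) ^ t = 0 := by rw [hc, hB0, zero_pow ht.ne']
    have : u + c * x = 0 := pow_eq_zero_iff ht.ne' |>.1 hA0
    exact huv (by linear_combination this - hB0)
  refine Set.mem_biUnion (x := (u + c * x) / (v + c * x))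
    (by simp only [Set.mem_setOf_eq, div_pow, hc, div_self (pow_ne_zero t hB)]) ?_
  simp only [Set.mem_setOf_eq]
  field_simp
  ring

omit [Field K] in
lemma exists_notin [Infinite K] {B : Set K} (hB : B.Finite) : ∃ c, c ∉ B :=
  hB.infinite_compl.nonempty

lemma interp (s : ℕ) {m : ℕ} (x : Fin m → K) (hinj : Function.Injective x)
    (h0 : ∀ i, x i ≠ 0) (d : Fin m → K) :
    ∃ S : K[X], X ^ s ∣ S ∧ ∀ i, S.eval (x i) = d i := by
  classical
  refine ⟨X ^ s * Lagrange.interpolate Finset.univ x (fun i => d i / (x i) ^ s),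
    dvd_mul_right _ _, fun i => ?_⟩
  rw [eval_mul, eval_pow, eval_X,
    Lagrange.eval_interpolate_at_node _ hinj.injOn (Finset.mem_univ i)]
  rw [mul_comm, div_mul_cancel₀ _ (pow_ne_zero s (h0 i))]

lemma std [Infinite K] (s t : ℕ) (ht : 0 < t) {m : ℕ} (P : Fin m → K × K)
    (hinj : Function.Injective P) (hP : ∀ i, P i ≠ 0) :
    ∃ g ∈ Subgroup.closure (Gset K s t),
      Function.Injective (fun i => (g (P i)).1) ∧ ∀ i, (g (P i)).1 ≠ 0 := by
  classical
  -- Step 1: make all first coordinates nonzero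
  have hB1 : (⋃ i, {α : K | (P i).1 + α * (P i).2 ^ t = 0}).Finite := by
    refine Set.finite_iUnion fun i => finite_linear _ _ ?_
    rcases eq_or_ne (P i).2 0 with h2 | h2
    · left
      intro h1
      exact hP i (Prod.ext h1 h2)
    · right; exact pow_ne_zero t h2
  obtain ⟨α, hα⟩ := exists_notin hB1
  set P1 : Fin m → K × K := fun i => Hmap t α (P i) with hP1def
  have hP1inj : Function.Injective P1 := (Hmap t α).injective.comp hinj
  have hP1x : ∀ i, (P1 i).1 ≠ 0 := by
    intro i h
    exact hα (Set.mem_iUnion.2 ⟨i, h⟩)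
  -- Step 2: separate t-th powers of y's on fibers of x
  have hB2 : (⋃ i, ⋃ j, {c : K | i ≠ j ∧ (P1 i).1 = (P1 j).1 ∧
      ((P1 i).2 + c * (P1 i).1 ^ s) ^ t = ((P1 j).2 + c * (P1 j).1 ^ s) ^ t}).Finite := by
    refine Set.finite_iUnion fun i => Set.finite_iUnion fun j => ?_
    by_cases h : i ≠ j ∧ (P1 i).1 = (P1 j).1
    · have huv : (P1 i).2 ≠ (P1 j).2 := by
        intro h2
        exact h.1 (hP1inj (Prod.ext h.2 h2))
      refine (finite_pow_eq t ht ((P1 i).1 ^ s) (P1 i).2 (P1 j).2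
        (pow_ne_zero s (hP1x i)) huv).subset ?_
      intro c hc
      simp only [Set.mem_setOf_eq] at hc ⊢
      rw [hc.2.2]
      rw [h.2]
    · refine Set.Finite.subset (Set.finite_empty) ?_
      intro c hc
      exact absurd ⟨hc.1, hc.2.1⟩ h
  obtain ⟨c, hc⟩ := exists_notin hB2
  set P2 : Fin m → K × K := fun i => Vmap (C c * X ^ s) (P1 i) with hP2def
  have hevalc : ∀ a : K, (C c * X ^ s : K[X]).eval a = c * a ^ s := by
    intro a; simp
  have hP2x : ∀ i, (P2 i).1 = (P1 i).1 := fun i => rfl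
  have hP2y : ∀ i, (P2 i).2 = (P1 i).2 + c * (P1 i).1 ^ s := by
    intro i
    show (P1 i).2 + (C c * X ^ s : K[X]).eval (P1 i).1 = _
    rw [hevalc]
  have hP2sep : ∀ i j, i ≠ j → (P2 i).1 = (P2 j).1 → ((P2 i).2) ^ t ≠ ((P2 j).2) ^ t := by
    intro i j hij hx h
    refine hc (Set.mem_iUnion.2 ⟨i, Set.mem_iUnion.2 ⟨j, hij, hx, ?_⟩⟩)
    rw [← hP2y i, ← hP2y j]
    exact h
  -- Step 3: make all first coordinates distinct (and still nonzero)
  have hB3 : ((⋃ i, {β : K | (P2 i).1 + β * (P2 i).2 ^ t = 0}) ∪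
      ⋃ i, ⋃ j, {β : K | i ≠ j ∧
        ((P2 i).1 - (P2 j).1) + β * ((P2 i).2 ^ t - (P2 j).2 ^ t) = 0}).Finite := by
    refine Set.Finite.union (Set.finite_iUnion fun i => finite_linear _ _ (Or.inl ?_))
      (Set.finite_iUnion fun i => Set.finite_iUnion fun j => ?_)
    · rw [hP2x]; exact hP1x i
    · by_cases hij : i = j
      · refine Set.Finite.subset (Set.finite_empty) ?_
        intro β hβ
        exact absurd hij hβ.1
      · refine Set.Finite.subset (finite_linear ((P2 i).1 - (P2 j).1)
          ((P2 i).2 ^ t - (P2 j).2 ^ t) ?_) ?_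
        · by_cases hxy : (P2 i).2 ^ t = (P2 j).2 ^ t
          · left
            refine sub_ne_zero.2 fun hx => ?_
            exact hP2sep i j hij hx hxy
          · right; exact sub_ne_zero.2 hxy
        · intro β hβ; exact hβ.2
  obtain ⟨β, hβ⟩ := exists_notin hB3
  have hβ1 : β ∉ ⋃ i, {β : K | (P2 i).1 + β * (P2 i).2 ^ t = 0} :=
    fun h => hβ (Set.mem_union_left _ h)
  have hβ2 : β ∉ ⋃ i, ⋃ j, {β : K | i ≠ j ∧
      ((P2 i).1 - (P2 j).1) + β * ((P2 i).2 ^ t - (P2 j).2 ^ t) = 0} :=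
    fun h => hβ (Set.mem_union_right _ h)
  refine ⟨Hmap t β * Vmap (C c * X ^ s) * Hmap t α,
    Subgroup.mul_mem _ (Subgroup.mul_mem _ (Hmem s t β)
      (Vmem s t _ (Dvd.intro_left _ rfl))) (Hmem s t α), ?_, ?_⟩
  · show Function.Injective (fun k => (P2 k).1 + β * (P2 k).2 ^ t)
    intro i j hEq
    by_contra hij
    refine hβ2 (Set.mem_iUnion.2 ⟨i, Set.mem_iUnion.2 ⟨j, hij, ?_⟩⟩)
    linear_combination hEq
  · intro i h
    have h3 : (((Hmap t β * Vmap (C c * X ^ s) * Hmap t α : Equiv.Perm (K × K)))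
        (P i)).1 = (P2 i).1 + β * (P2 i).2 ^ t := rfl
    rw [h3] at h
    exact hβ1 (Set.mem_iUnion.2 ⟨i, h⟩)


lemma match_std [IsAlgClosed K] (s t : ℕ) (ht : 0 < t) {m : ℕ} (P Q : Fin m → K × K)
    (hPx : Function.Injective fun i => (P i).1) (hP0 : ∀ i, (P i).1 ≠ 0)
    (hQx : Function.Injective fun i => (Q i).1) (hQ0 : ∀ i, (Q i).1 ≠ 0) :
    ∃ g ∈ Subgroup.closure (Gset K s t), ∀ i, g (P i) = Q i := by
  choose w hw using fun i => IsAlgClosed.exists_pow_nat_eq ((Q i).1 - (P i).1) ht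
  obtain ⟨S1, hS1d, hS1⟩ := interp s (fun i => (P i).1) hPx hP0 (fun i => w i - (P i).2)
  obtain ⟨S2, hS2d, hS2⟩ := interp s (fun i => (Q i).1) hQx hQ0 (fun i => (Q i).2 - w i)
  refine ⟨Vmap S2 * Hmap t 1 * Vmap S1,
    Subgroup.mul_mem _ (Subgroup.mul_mem _ (Vmem s t _ hS2d) (Hmem s t 1))
      (Vmem s t _ hS1d), fun i => ?_⟩
  have h1 : Vmap S1 (P i) = ((P i).1, w i) := by
    show ((P i).1, (P i).2 + S1.eval (P i).1) = _
    have e1 := hS1 i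
    rw [e1]
    simp
  have h2 : Hmap t 1 ((P i).1, w i) = ((Q i).1, w i) := by
    show ((P i).1 + 1 * (w i) ^ t, w i) = _
    rw [one_mul, hw i]
    simp
  have h3 : Vmap S2 ((Q i).1, w i) = Q i := by
    show ((Q i).1, w i + S2.eval (Q i).1) = _
    have e2 := hS2 i
    rw [e2]
    simp
  show Vmap S2 (Hmap t 1 (Vmap S1 (P i))) = Q i
  rw [h1, h2, h3]

end Stmt13Aux

theorem stmt_13 (K : Type*) [Field K] [IsAlgClosed K] [CharZero K] (s t : ℕ)
    (hs : 0 < s) (ht : 0 < t) :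
    ∀ (m : ℕ), 0 < m → ∀ P Q : Fin m → K × K,
      Function.Injective P → Function.Injective Q →
      (∀ i, P i ≠ 0) → (∀ i, Q i ≠ 0) →
      ∃ σ ∈ Subgroup.closure ({σ : Equiv.Perm (K × K) |
          (∃ α : K, ∀ p : K × K, σ p = (p.1 + α * p.2 ^ t, p.2)) ∨
          (∃ S : Polynomial K, (Polynomial.X ^ s ∣ S) ∧
            ∀ p : K × K, σ p = (p.1, p.2 + S.eval p.1))}),
        ∀ i, σ (P i) = Q i := by
  intro m _ P Q hPinj hQinj hP0 hQ0
  obtain ⟨gP, hgPmem, hgPinj, hgPx⟩ := Stmt13Aux.std s t ht P hPinj hP0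
  obtain ⟨gQ, hgQmem, hgQinj, hgQx⟩ := Stmt13Aux.std s t ht Q hQinj hQ0
  obtain ⟨gM, hgMmem, hgM⟩ := Stmt13Aux.match_std s t ht
    (fun i => gP (P i)) (fun i => gQ (Q i)) hgPinj hgPx hgQinj hgQx
  refine ⟨gQ⁻¹ * gM * gP, ?_, fun i => ?_⟩
  · exact Subgroup.mul_mem _ (Subgroup.mul_mem _ (Subgroup.inv_mem _ hgQmem) hgMmem) hgPmem
  · show gQ⁻¹ (gM (gP (P i))) = Q i
    have := hgM i
    rw [this]
    exact Equiv.symm_apply_apply gQ (Q i)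
end

section
/- Let K be an infinite field, s, t positive integers, and let P₁, ..., P_m, P, Q be distinct points of K² \ {0}. Then there exists an automorphism g of K² which is a composition of maps of the forms (x,y) ↦ (x + α y^t, y) (α ∈ K) and (x,y) ↦ (x, y + S(x)) (S ∈ K[x] divisible by x^s) such that g·P_i = P_i for all i and g·P = Q. -/
open Polynomial

private lemma aux_pick {K : Type*} [Infinite K] (s : Set K) (h : s.Finite) : ∃ x, x ∉ s := by
  exact h.infinite_compl.nonempty

private lemma aux_line {K : Type*} [Field K] (a b c d : K) (h : b ≠ d ∨ a ≠ c) :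
    {α : K | a + α * b = c + α * d}.Finite := by
  by_cases hbd : b = d
  · have hac : a ≠ c := h.resolve_left (by simp [hbd])
    refine Set.Finite.subset Set.finite_empty fun α hα => ?_
    simp only [Set.mem_setOf_eq] at hα
    exact absurd (by linear_combination hα - α * hbd) hac
  · refine Set.Finite.subset (Set.finite_singleton ((c - a) / (b - d))) fun α hα => ?_
    simp only [Set.mem_setOf_eq] at hα
    simp only [Set.mem_singleton_iff]
    rw [eq_div_iff (sub_ne_zero.mpr hbd)]
    linear_combination hα

private lemma aux_shiftpow {K : Type*} [Field K] (t : ℕ) (ht : 0 < t) (a b : K) (hab : a ≠ b) :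
    {x : K | (a + x) ^ t = (b + x) ^ t}.Finite := by
  have hp : ((C a + X) ^ t - (C b + X) ^ t : K[X]) ≠ 0 := by
    intro h
    have h2 := congrArg (eval (-b)) h
    simp only [eval_sub, eval_pow, eval_add, eval_C, eval_X, add_neg_cancel,
      zero_pow ht.ne', sub_zero, eval_zero] at h2
    exact hab (by linear_combination (pow_eq_zero_iff ht.ne').mp h2)
  refine Set.Finite.subset (Polynomial.finite_setOf_isRoot hp) fun x hx => ?_
  simp only [Set.mem_setOf_eq] at hx ⊢
  simp [Polynomial.IsRoot, hx]

private lemma aux_powval {K : Type*} [Field K] (t : ℕ) (ht : 0 < t) (c : K) :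
    {x : K | x ^ t = c}.Finite := by
  refine Set.Finite.subset (Polynomial.finite_setOf_isRoot (X_pow_sub_C_ne_zero ht c))
    fun x hx => ?_
  simp only [Set.mem_setOf_eq] at hx ⊢
  simp [Polynomial.IsRoot, sub_eq_zero, hx]

private lemma aux_S0 {K : Type*} [Field K] (s : ℕ) (v₁ v₂ σ : K) (h1 : v₁ ≠ 0) (h2 : v₂ ≠ 0) :
    ∃ S : K[X], X ^ s ∣ S ∧ S.eval v₁ = σ ∧ S.eval v₂ = σ := by
  by_cases h : v₁ = v₂
  · subst h
    refine ⟨X ^ s * C (σ / v₁ ^ s), dvd_mul_right _ _, ?_, ?_⟩ <;>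
    · simp only [eval_mul, eval_pow, eval_X, eval_C]
      field_simp
  · refine ⟨X ^ s * (C (σ / (v₁ ^ s * (v₁ - v₂))) * (X - C v₂) +
      C (σ / (v₂ ^ s * (v₂ - v₁))) * (X - C v₁)), dvd_mul_right _ _, ?_, ?_⟩
    · simp only [eval_mul, eval_add, eval_sub, eval_pow, eval_X, eval_C, sub_self, mul_zero,
        add_zero]
      field_simp [sub_ne_zero.mpr h]
    · simp only [eval_mul, eval_add, eval_sub, eval_pow, eval_X, eval_C, sub_self, mul_zero,
        zero_add]
      have h' : v₂ - v₁ ≠ 0 := sub_ne_zero.mpr (Ne.symm h)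
      field_simp

private lemma aux_Svan {K : Type*} [Field K] (s : ℕ) (Z : Finset K) (u c : K)
    (hu0 : u ≠ 0) (huZ : u ∉ Z) :
    ∃ S : K[X], X ^ s ∣ S ∧ S.eval u = c ∧ ∀ z ∈ Z, S.eval z = 0 := by
  refine ⟨X ^ s * (C (c / (u ^ s * ∏ z ∈ Z, (u - z))) * ∏ z ∈ Z, (X - C z)),
    dvd_mul_right _ _, ?_, ?_⟩
  · have hD : (∏ z ∈ Z, (u - z)) ≠ 0 :=
      Finset.prod_ne_zero_iff.mpr fun z hz => sub_ne_zero.mpr (fun h => huZ (h ▸ hz))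
    simp only [eval_mul, eval_pow, eval_X, eval_C, eval_prod, eval_sub]
    field_simp
  · intro z hz
    simp only [eval_mul, eval_pow, eval_X, eval_C, eval_prod, eval_sub]
    rw [Finset.prod_eq_zero hz (sub_self z)]
    ring
private def Hmap (K : Type*) [Field K] (t : ℕ) (γ : K) : Function.End (K × K) :=
  fun p => (p.1 + γ * p.2 ^ t, p.2)

private def Kmap (K : Type*) [Field K] (S : Polynomial K) : Function.End (K × K) :=
  fun p => (p.1, p.2 + S.eval p.1)

private lemma Hmap_apply {K : Type*} [Field K] (t : ℕ) (γ : K) (p : K × K) :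
    Hmap K t γ p = (p.1 + γ * p.2 ^ t, p.2) := rfl

private lemma Kmap_apply {K : Type*} [Field K] (S : Polynomial K) (p : K × K) :
    Kmap K S p = (p.1, p.2 + S.eval p.1) := rfl

theorem stmt_14 (K : Type*) [Field K] [Infinite K] (s t : ℕ) (hs : 0 < s) (ht : 0 < t)
    (m : ℕ) (Pts : Fin m → K × K) (P Q : K × K)
    (hinj : Function.Injective Pts)
    (hPtsP : ∀ i, Pts i ≠ P) (hPtsQ : ∀ i, Pts i ≠ Q) (hPQ : P ≠ Q)
    (h0 : ∀ i, Pts i ≠ 0) (hP0 : P ≠ 0) (hQ0 : Q ≠ 0) :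
    ∃ g ∈ Submonoid.closure ({g : Function.End (K × K) |
        (∃ α : K, ∀ p : K × K, g p = (p.1 + α * p.2 ^ t, p.2)) ∨
        (∃ S : Polynomial K, (Polynomial.X ^ s ∣ S) ∧
          ∀ p : K × K, g p = (p.1, p.2 + S.eval p.1))}),
      (∀ i, g (Pts i) = Pts i) ∧ g P = Q := by
  classical
  set G : Set (Function.End (K × K)) :=
    {g : Function.End (K × K) |
        (∃ α : K, ∀ p : K × K, g p = (p.1 + α * p.2 ^ t, p.2)) ∨
        (∃ S : Polynomial K, (Polynomial.X ^ s ∣ S) ∧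
          ∀ p : K × K, g p = (p.1, p.2 + S.eval p.1))} with hGdef
  have hHm : ∀ γ : K, Hmap K t γ ∈ Submonoid.closure G := by
    intro γ
    exact Submonoid.subset_closure (by rw [hGdef]; exact Or.inl ⟨γ, fun p => rfl⟩)
  have hKm : ∀ S : Polynomial K, Polynomial.X ^ s ∣ S → Kmap K S ∈ Submonoid.closure G := by
    intro S hS
    exact Submonoid.subset_closure (by rw [hGdef]; exact Or.inr ⟨S, hS, fun p => rfl⟩)
  -- nondegeneracy of nonzero points
  have hne2 : ∀ R : K × K, R ≠ 0 → (R.2 ^ t ≠ 0 ∨ R.1 ≠ 0) := by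
    intro R hR
    rcases eq_or_ne R.2 0 with h2 | h2
    · right; intro h1; exact hR (Prod.ext h1 h2)
    · left; exact pow_ne_zero _ h2
  -- Step 1 : choose β
  obtain ⟨β, hβ⟩ := aux_pick _ ((aux_line P.1 (P.2 ^ t) 0 0 (hne2 P hP0)).union
      (aux_line Q.1 (Q.2 ^ t) 0 0 (hne2 Q hQ0)))
  rw [Set.mem_union] at hβ
  push_neg at hβ
  have hvP : P.1 + β * P.2 ^ t ≠ 0 := by
    intro h; exact hβ.1 (by simpa [Set.mem_setOf_eq] using h)
  have hvQ : Q.1 + β * Q.2 ^ t ≠ 0 := by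
    intro h; exact hβ.2 (by simpa [Set.mem_setOf_eq] using h)
  set vP := P.1 + β * P.2 ^ t with hvPdef
  set vQ := Q.1 + β * Q.2 ^ t with hvQdef
  set v : Fin m → K := fun j => (Pts j).1 + β * (Pts j).2 ^ t with hvdef
  have hbP : ∀ j, v j = vP → (Pts j).2 ≠ P.2 := by
    intro j hj hb
    apply hPtsP j
    simp only [hvdef, hvPdef, hb] at hj
    exact Prod.ext (by linear_combination hj) hb
  have hbQ : ∀ j, v j = vQ → (Pts j).2 ≠ Q.2 := by
    intro j hj hb
    apply hPtsQ j
    simp only [hvdef, hvQdef, hb] at hj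
    exact Prod.ext (by linear_combination hj) hb
  -- Step 2 : choose σ
  have hfin1 : ∀ j : Fin m,
      (if v j = vP then {σ : K | (P.2 + σ) ^ t = ((Pts j).2 + σ) ^ t} else (∅ : Set K)).Finite := by
    intro j
    split_ifs with h
    · exact aux_shiftpow t ht _ _ fun hb => hbP j h hb.symm
    · exact Set.finite_empty
  have hfin2 : ∀ j : Fin m,
      (if v j = vQ then {σ : K | (Q.2 + σ) ^ t = ((Pts j).2 + σ) ^ t} else (∅ : Set K)).Finite := by
    intro j
    split_ifs with h
    · exact aux_shiftpow t ht _ _ fun hb => hbQ j h hb.symm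
    · exact Set.finite_empty
  obtain ⟨σ, hσ⟩ := aux_pick _
    ((((aux_line P.2 1 0 0 (Or.inl one_ne_zero)).union
        (aux_line Q.2 1 0 0 (Or.inl one_ne_zero))).union
      (Set.finite_iUnion hfin1)).union (Set.finite_iUnion hfin2))
  simp only [Set.mem_union, Set.mem_iUnion, not_or, not_exists, Set.mem_setOf_eq] at hσ
  have hyP0 : P.2 + σ ≠ 0 := by
    intro h; exact hσ.1.1.1 (by linear_combination h)
  have hyQ0 : Q.2 + σ ≠ 0 := by
    intro h; exact hσ.1.1.2 (by linear_combination h)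
  have hPow : ∀ j, v j = vP → (P.2 + σ) ^ t ≠ ((Pts j).2 + σ) ^ t := by
    intro j hj hpow
    have h' := hσ.1.2 j
    rw [if_pos hj] at h'
    exact h' hpow
  have hQow : ∀ j, v j = vQ → (Q.2 + σ) ^ t ≠ ((Pts j).2 + σ) ^ t := by
    intro j hj hpow
    have h' := hσ.2 j
    rw [if_pos hj] at h'
    exact h' hpow
  set yP := P.2 + σ with hyPdef
  set yQ := Q.2 + σ with hyQdef
  -- Step 3 : S₀ and transformed points
  obtain ⟨S₀, hS₀d, hS₀P, hS₀Q⟩ := aux_S0 s vP vQ σ hvP hvQ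
  set w : Fin m → K := fun j => (Pts j).2 + S₀.eval (v j) with hwdef
  have hwP : ∀ j, v j = vP → yP ^ t ≠ (w j) ^ t := by
    intro j hj
    have hwj : w j = (Pts j).2 + σ := by simp only [hwdef]; rw [hj, hS₀P]
    rw [hwj, hyPdef]
    exact hPow j hj
  have hwQ : ∀ j, v j = vQ → yQ ^ t ≠ (w j) ^ t := by
    intro j hj
    have hwj : w j = (Pts j).2 + σ := by simp only [hwdef]; rw [hj, hS₀Q]
    rw [hwj, hyQdef]
    exact hQow j hj
  -- Step 4 : choose y'
  obtain ⟨y', hy'⟩ := aux_pick _ ((aux_powval t ht (yP ^ t)).union (aux_powval t ht (yQ ^ t)))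
  rw [Set.mem_union] at hy'
  push_neg at hy'
  simp only [Set.mem_setOf_eq] at hy'
  have hdP : yP ^ t - y' ^ t ≠ 0 := sub_ne_zero.mpr fun h => hy'.1 h.symm
  have hdQ : y' ^ t - yQ ^ t ≠ 0 := sub_ne_zero.mpr hy'.2
  -- Step 5 : choose α
  set F : K → K := fun α => (vQ - vP - α * (yP ^ t - y' ^ t)) / (y' ^ t - yQ ^ t) with hFdef
  have hFinj : Function.Injective F := by
    intro x y hxy
    simp only [hFdef] at hxy
    rw [div_eq_div_iff hdQ hdQ] at hxy
    have h1 := mul_right_cancel₀ hdQ hxy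
    have h2 : x * (yP ^ t - y' ^ t) = y * (yP ^ t - y' ^ t) := by linear_combination -h1
    exact mul_right_cancel₀ hdP h2
  set bad2 : Set K := {z : K | vQ + z * yQ ^ t = 0 + z * 0} ∪
      ⋃ j, {z : K | vQ + z * yQ ^ t = v j + z * (w j) ^ t} with hbad2def
  have hbad2 : bad2.Finite := by
    refine Set.Finite.union (aux_line _ _ _ _ (Or.inl (pow_ne_zero t hyQ0)))
      (Set.finite_iUnion fun j => aux_line _ _ _ _ ?_)
    rcases eq_or_ne (yQ ^ t) ((w j) ^ t) with h | h
    · exact Or.inr fun hc => hwQ j hc.symm h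
    · exact Or.inl h
  obtain ⟨α, hα⟩ := aux_pick _ (((aux_line vP (yP ^ t) 0 0 (Or.inl (pow_ne_zero t hyP0))).union
      (Set.finite_iUnion fun j => aux_line vP (yP ^ t) (v j) ((w j) ^ t)
        (by
          rcases eq_or_ne (yP ^ t) ((w j) ^ t) with h | h
          · exact Or.inr fun hc => hwP j hc.symm h
          · exact Or.inl h))).union
      (Set.Finite.preimage (Set.injOn_of_injective hFinj) hbad2))
  simp only [Set.mem_union, Set.mem_iUnion, not_or, not_exists, Set.mem_setOf_eq,
    Set.mem_preimage] at hα
  have hu10 : vP + α * yP ^ t ≠ 0 := by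
    intro h; exact hα.1.1 (by linear_combination h)
  have hu1j : ∀ j, vP + α * yP ^ t ≠ v j + α * (w j) ^ t := hα.1.2
  set α₂ := F α with hα₂def
  have hα2 : α₂ ∉ bad2 := hα.2
  rw [hbad2def] at hα2
  simp only [Set.mem_union, Set.mem_iUnion, not_or, not_exists, Set.mem_setOf_eq] at hα2
  have hu20 : vQ + α₂ * yQ ^ t ≠ 0 := by
    intro h; exact hα2.1 (by linear_combination h)
  have hu2j : ∀ j, vQ + α₂ * yQ ^ t ≠ v j + α₂ * (w j) ^ t := hα2.2
  set u₁ := vP + α * yP ^ t with hu₁def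
  set u₂ := vQ + α₂ * yQ ^ t with hu₂def
  have hlink : u₁ + -α * y' ^ t + α₂ * y' ^ t = u₂ := by
    have h2 : α₂ * (y' ^ t - yQ ^ t) = vQ - vP - α * (yP ^ t - y' ^ t) := by
      rw [hα₂def, hFdef]
      exact div_mul_cancel₀ _ hdQ
    rw [hu₁def, hu₂def]
    linear_combination h2
  -- S₁ and S₂
  set Z₁ : Finset K := Finset.image (fun j => v j + α * (w j) ^ t) Finset.univ with hZ₁def
  have hu1Z : u₁ ∉ Z₁ := by
    simp only [hZ₁def, Finset.mem_image, Finset.mem_univ, true_and, not_exists]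
    intro j hj
    exact hu1j j hj.symm
  obtain ⟨S₁, hS₁d, hS₁u, hS₁z⟩ := aux_Svan s Z₁ u₁ (y' - yP) hu10 hu1Z
  have hS₁j : ∀ j, S₁.eval (v j + α * (w j) ^ t) = 0 := fun j =>
    hS₁z _ (by simp only [hZ₁def, Finset.mem_image]; exact ⟨j, Finset.mem_univ j, rfl⟩)
  set Z₂ : Finset K := Finset.image (fun j => v j + α₂ * (w j) ^ t) Finset.univ with hZ₂def
  have hu2Z : u₂ ∉ Z₂ := by
    simp only [hZ₂def, Finset.mem_image, Finset.mem_univ, true_and, not_exists]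
    intro j hj
    exact hu2j j hj.symm
  obtain ⟨S₂, hS₂d, hS₂u, hS₂z⟩ := aux_Svan s Z₂ u₂ (yQ - y') hu20 hu2Z
  have hS₂j : ∀ j, S₂.eval (v j + α₂ * (w j) ^ t) = 0 := fun j =>
    hS₂z _ (by simp only [hZ₂def, Finset.mem_image]; exact ⟨j, Finset.mem_univ j, rfl⟩)
  -- the automorphism
  refine ⟨Hmap K t (-β) * Kmap K (-S₀) * Hmap K t (-α₂) * Kmap K S₂ * Hmap K t α₂ *
      Hmap K t (-α) * Kmap K S₁ * Hmap K t α * Kmap K S₀ * Hmap K t β, ?_, ?_, ?_⟩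
  · refine mul_mem (mul_mem (mul_mem (mul_mem (mul_mem (mul_mem (mul_mem (mul_mem
      (mul_mem ?_ ?_) ?_) ?_) ?_) ?_) ?_) ?_) ?_) ?_
    exacts [hHm _, hKm _ (dvd_neg.mpr hS₀d), hHm _, hKm _ hS₂d, hHm _, hHm _,
      hKm _ hS₁d, hHm _, hKm _ hS₀d, hHm _]
  · intro i
    show Hmap K t (-β) (Kmap K (-S₀) (Hmap K t (-α₂) (Kmap K S₂ (Hmap K t α₂ (Hmap K t (-α)
      (Kmap K S₁ (Hmap K t α (Kmap K S₀ (Hmap K t β (Pts i)))))))))) = Pts i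
    have e1 : Hmap K t β (Pts i) = (v i, (Pts i).2) := by
      simp only [Hmap_apply, hvdef]
    have e2 : Kmap K S₀ (v i, (Pts i).2) = (v i, w i) := by
      simp only [Kmap_apply, hwdef]
    have e3 : Hmap K t α (v i, w i) = (v i + α * (w i) ^ t, w i) := rfl
    have e4 : Kmap K S₁ (v i + α * (w i) ^ t, w i) = (v i + α * (w i) ^ t, w i) := by
      simp only [Kmap_apply, hS₁j i, add_zero]
    have e5 : Hmap K t (-α) (v i + α * (w i) ^ t, w i) = (v i, w i) := by
      simp only [Hmap_apply, Prod.mk.injEq]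
      exact ⟨by ring, trivial⟩
    have e6 : Hmap K t α₂ (v i, w i) = (v i + α₂ * (w i) ^ t, w i) := rfl
    have e7 : Kmap K S₂ (v i + α₂ * (w i) ^ t, w i) = (v i + α₂ * (w i) ^ t, w i) := by
      simp only [Kmap_apply, hS₂j i, add_zero]
    have e8 : Hmap K t (-α₂) (v i + α₂ * (w i) ^ t, w i) = (v i, w i) := by
      simp only [Hmap_apply, Prod.mk.injEq]
      exact ⟨by ring, trivial⟩
    have e9 : Kmap K (-S₀) (v i, w i) = (v i, (Pts i).2) := by
      simp only [Kmap_apply, Polynomial.eval_neg, hwdef, Prod.mk.injEq]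
      exact ⟨trivial, by ring⟩
    have e10 : Hmap K t (-β) (v i, (Pts i).2) = Pts i := by
      simp only [Hmap_apply, hvdef, Prod.mk.injEq]
      exact Prod.ext (by ring) rfl
    rw [e1, e2, e3, e4, e5, e6, e7, e8, e9, e10]
  · show Hmap K t (-β) (Kmap K (-S₀) (Hmap K t (-α₂) (Kmap K S₂ (Hmap K t α₂ (Hmap K t (-α)
      (Kmap K S₁ (Hmap K t α (Kmap K S₀ (Hmap K t β P))))))))) = Q
    have p1 : Hmap K t β P = (vP, P.2) := by
      simp only [Hmap_apply, hvPdef]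
    have p2 : Kmap K S₀ (vP, P.2) = (vP, yP) := by
      simp only [Kmap_apply, hS₀P, hyPdef]
    have p3 : Hmap K t α (vP, yP) = (u₁, yP) := by
      simp only [Hmap_apply, hu₁def]
    have p4 : Kmap K S₁ (u₁, yP) = (u₁, y') := by
      simp only [Kmap_apply, hS₁u, Prod.mk.injEq]
      exact ⟨trivial, by ring⟩
    have p5 : Hmap K t (-α) (u₁, y') = (u₁ + -α * y' ^ t, y') := rfl
    have p6 : Hmap K t α₂ (u₁ + -α * y' ^ t, y') = (u₂, y') := by
      simp only [Hmap_apply, Prod.mk.injEq]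
      exact ⟨by linear_combination hlink, trivial⟩
    have p7 : Kmap K S₂ (u₂, y') = (u₂, yQ) := by
      simp only [Kmap_apply, hS₂u, Prod.mk.injEq]
      exact ⟨trivial, by ring⟩
    have p8 : Hmap K t (-α₂) (u₂, yQ) = (vQ, yQ) := by
      simp only [Hmap_apply, hu₂def, Prod.mk.injEq]
      exact ⟨by ring, trivial⟩
    have p9 : Kmap K (-S₀) (vQ, yQ) = (vQ, Q.2) := by
      simp only [Kmap_apply, Polynomial.eval_neg, hS₀Q, hyQdef, Prod.mk.injEq]
      exact ⟨trivial, by ring⟩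
    have p10 : Hmap K t (-β) (vQ, Q.2) = Q := by
      simp only [Hmap_apply, hvQdef]
      exact Prod.ext (by ring) rfl
    rw [p1, p2, p3, p4, p5, p6, p7, p8, p9, p10]
end

section
/- Let K be a field of characteristic zero, m > 1 an integer, ω ∈ K a primitive m-th root of unity, and d₁, ..., d_k positive integers with m | d_i − 1 for all i. Then for the group G generated by H₁ = {(x,y) ↦ (x+αy, y)} and K_{d_i} = {(x,y) ↦ (x, y+βx^{d_i})}, the diagonal G-action on the set of pairs of distinct points of K² \ {0} is not transitive; i.e., G does not act 2-transitively on K² \ {0}. In particular, if gcd(d₁−1, ..., d_k−1) > 1 then ⟨H₁, K_{d₁}, ..., K_{d_k}⟩ does not act 2-transitively on A² \ {0}. -/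
theorem stmt_17 (K : Type*) [Field K] [CharZero K] [IsAlgClosed K] :
    (∀ (m : ℕ), 1 < m → ∀ ω : K, IsPrimitiveRoot ω m →
      ∀ (k : ℕ) (d : Fin k → ℕ), (∀ i, 0 < d i) → (∀ i, (m : ℤ) ∣ (d i : ℤ) - 1) →
      ¬ (∀ P₁ P₂ Q₁ Q₂ : K × K, P₁ ≠ 0 → P₂ ≠ 0 → Q₁ ≠ 0 → Q₂ ≠ 0 → P₁ ≠ P₂ → Q₁ ≠ Q₂ →
          ∃ σ ∈ Subgroup.closure ({σ : Equiv.Perm (K × K) |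
              (∃ α : K, ∀ p : K × K, σ p = (p.1 + α * p.2, p.2)) ∨
              (∃ (β : K) (i : Fin k), ∀ p : K × K, σ p = (p.1, p.2 + β * p.1 ^ (d i)))}),
            σ P₁ = Q₁ ∧ σ P₂ = Q₂)) ∧
    (∀ (k : ℕ) (d : Fin k → ℕ), (∀ i, 0 < d i) →
      1 < Finset.univ.gcd (fun i => ((d i : ℤ) - 1).natAbs) →
      ¬ (∀ P₁ P₂ Q₁ Q₂ : K × K, P₁ ≠ 0 → P₂ ≠ 0 → Q₁ ≠ 0 → Q₂ ≠ 0 → P₁ ≠ P₂ → Q₁ ≠ Q₂ →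
          ∃ σ ∈ Subgroup.closure ({σ : Equiv.Perm (K × K) |
              (∃ α : K, ∀ p : K × K, σ p = (p.1 + α * p.2, p.2)) ∨
              (∃ (β : K) (i : Fin k), ∀ p : K × K, σ p = (p.1, p.2 + β * p.1 ^ (d i)))}),
            σ P₁ = Q₁ ∧ σ P₂ = Q₂)) := by
  have main : ∀ (m : ℕ), 1 < m → ∀ ω : K, IsPrimitiveRoot ω m →
      ∀ (k : ℕ) (d : Fin k → ℕ), (∀ i, 0 < d i) → (∀ i, (m : ℤ) ∣ (d i : ℤ) - 1) →
      ¬ (∀ P₁ P₂ Q₁ Q₂ : K × K, P₁ ≠ 0 → P₂ ≠ 0 → Q₁ ≠ 0 → Q₂ ≠ 0 → P₁ ≠ P₂ → Q₁ ≠ Q₂ →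
          ∃ σ ∈ Subgroup.closure ({σ : Equiv.Perm (K × K) |
              (∃ α : K, ∀ p : K × K, σ p = (p.1 + α * p.2, p.2)) ∨
              (∃ (β : K) (i : Fin k), ∀ p : K × K, σ p = (p.1, p.2 + β * p.1 ^ (d i)))}),
            σ P₁ = Q₁ ∧ σ P₂ = Q₂) := by
    intro m hm ω hω k d hd hdvd htrans
    have hm0 : m ≠ 0 := by omega
    have hω0 : ω ≠ 0 := hω.ne_zero hm0
    have hω1 : ω ≠ 1 := hω.ne_one hm
    have hωm : ω ^ m = 1 := hω.pow_eq_one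
    -- the scaling permutation τ : p ↦ ω • p
    set u : Kˣ := Units.mk0 ω hω0 with hu
    set τ : Equiv.Perm (K × K) := MulAction.toPerm u with hτ
    have hτapp : ∀ p : K × K, τ p = (ω * p.1, ω * p.2) := by
      intro p
      rfl
    -- ω ^ (d i) = ω
    have hpow : ∀ i, ω ^ (d i) = ω := by
      intro i
      have h1 : 1 ≤ d i := hd i
      have : (m : ℤ) ∣ ((d i - 1 : ℕ) : ℤ) := by
        rw [Nat.cast_sub h1, Nat.cast_one]; exact hdvd i
      obtain ⟨t, ht⟩ := Int.ofNat_dvd.mp (by exact_mod_cast this)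
      calc ω ^ d i = ω ^ (d i - 1) * ω := by
            rw [← pow_succ]; congr 1; omega
        _ = (ω ^ m) ^ t * ω := by rw [← pow_mul, ← ht]
        _ = ω := by rw [hωm, one_pow, one_mul]
    -- every generator commutes with τ
    have hcent : Subgroup.closure ({σ : Equiv.Perm (K × K) |
              (∃ α : K, ∀ p : K × K, σ p = (p.1 + α * p.2, p.2)) ∨
              (∃ (β : K) (i : Fin k), ∀ p : K × K, σ p = (p.1, p.2 + β * p.1 ^ (d i)))})
        ≤ Subgroup.centralizer {τ} := by
      apply Subgroup.closure_le _ |>.mpr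
      rintro σ (⟨α, hσ⟩ | ⟨β, i, hσ⟩)
      · rw [SetLike.mem_coe, Subgroup.mem_centralizer_singleton_iff]
        ext p <;> simp only [Equiv.Perm.mul_apply, hσ, hτapp] <;> ring
      · rw [SetLike.mem_coe, Subgroup.mem_centralizer_singleton_iff]
        ext p <;> simp only [Equiv.Perm.mul_apply, hσ, hτapp, mul_pow, hpow i] <;> ring
    -- the counterexample
    obtain ⟨σ, hσmem, hσ1, hσ2⟩ := htrans (1, 0) (ω, 0) (1, 0) (1, 1)
      (by simp [Prod.ext_iff]) (by simp [Prod.ext_iff, hω0])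
      (by simp [Prod.ext_iff]) (by simp [Prod.ext_iff])
      (by simp [Prod.ext_iff]; exact fun h => absurd h.symm hω1) (by simp [Prod.ext_iff])
    have hcomm := Subgroup.mem_centralizer_singleton_iff.mp (hcent hσmem)
    have : σ (τ (1, 0)) = τ (σ (1, 0)) := by
      have := congrArg (fun f => f (1, 0)) hcomm
      simpa [Equiv.Perm.mul_apply] using this
    rw [hσ1] at this
    have h10 : τ ((1 : K), (0 : K)) = (ω, 0) := by simp [hτapp]
    rw [h10] at this
    rw [hσ2] at this
    have := congrArg Prod.snd this
    simp [hτapp] at this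
  constructor
  · exact main
  · intro k d hd hgcd htrans
    set g : ℕ := Finset.univ.gcd (fun i => ((d i : ℤ) - 1).natAbs) with hg
    have : NeZero g := ⟨by omega⟩
    have : NeZero (g : K) := ⟨Nat.cast_ne_zero.mpr (by omega)⟩
    obtain ⟨ω, hω⟩ := HasEnoughRootsOfUnity.exists_primitiveRoot K g
    refine main g hgcd ω hω k d hd (fun i => ?_) htrans
    have hdvd : g ∣ ((d i : ℤ) - 1).natAbs :=
      Finset.gcd_dvd (Finset.mem_univ i)
    exact Int.dvd_natAbs.mp (Int.natCast_dvd_natCast.mpr hdvd)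
end
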